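/- Let $E$ and $F$ be partially ordered vector spaces with order units $1_E$ and $1_F$, equipped with their order-norm topologies. Then every weakly additive, order-preserving operator $T\colon E \to F$ is continuous. -/

import Mathlib

/-- The order norm `‖x‖ = inf {c > 0 : -c•e ≤ x ≤ c•e}` of a space with order unit `e`. -/
noncomputable def ordNorm {L : Type*} [AddCommGroup L] [PartialOrder L] [Module ℝ L]
    (e x : L) : ℝ :=
  sInf {c : ℝ | 0 < c ∧ -(c • e) ≤ x ∧ x ≤ c • e}

/-- `e` is an order unit: every element is bounded by a multiple of `e`. -/
def IsOrderUnit {L : Type*} [AddCommGroup L] [PartialOrder L] [Module ℝ L] (e : L) : Prop :=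
  ∀ x : L, ∃ l : ℝ, 0 < l ∧ -(l • e) ≤ x ∧ x ≤ l • e

/-- The space is Archimedean with respect to the order unit `e`. -/
def IsArch {L : Type*} [AddCommGroup L] [PartialOrder L] [Module ℝ L] (e : L) : Prop :=
  ∀ x : L, (∀ n : ℕ, 0 < n → (n : ℝ) • x ≤ e) → x ≤ 0

/-- An operator `T` is weakly additive with respect to the order unit `e`. -/
def WAddOp {L M : Type*} [AddCommGroup L] [Module ℝ L] [AddCommGroup M] [Module ℝ M]
    (e : L) (T : L → M) : Prop :=
  ∀ x : L, ∀ l : ℝ, T (x + l • e) = T x + l • T e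

theorem stmt10 {E F : Type*}
    [AddCommGroup E] [PartialOrder E] [IsOrderedAddMonoid E] [Module ℝ E] [PosSMulStrictMono ℝ E]
    [AddCommGroup F] [PartialOrder F] [IsOrderedAddMonoid F] [Module ℝ F] [PosSMulStrictMono ℝ F]
    (eE : E) (eF : F) (huE : IsOrderUnit eE) (haE : IsArch eE)
    (huF : IsOrderUnit eF) (haF : IsArch eF)
    (T : E → F) (hwa : WAddOp eE T) (hmono : Monotone T) :
    ∀ x : E, ∀ ε : ℝ, 0 < ε → ∃ δ : ℝ, 0 < δ ∧
      ∀ y : E, ordNorm eE (y - x) < δ → ordNorm eF (T y - T x) < ε := by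
  -- positivity of order units
  have heE : (0 : E) ≤ eE := by
    obtain ⟨l, hl, -, h2⟩ := huE 0
    have := smul_nonneg (le_of_lt (inv_pos.mpr hl)) h2
    rwa [smul_smul, inv_mul_cancel₀ hl.ne', one_smul] at this
  have heF : (0 : F) ≤ eF := by
    obtain ⟨l, hl, -, h2⟩ := huF 0
    have := smul_nonneg (le_of_lt (inv_pos.mpr hl)) h2
    rwa [smul_smul, inv_mul_cancel₀ hl.ne', one_smul] at this
  -- bound T eE by a multiple of eF
  obtain ⟨M, hM, -, hTe⟩ := huF (T eE)
  intro x ε hε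
  refine ⟨ε / (2 * M), by positivity, ?_⟩
  intro y hy
  -- extract an order bound from ordNorm < δ
  have hne : {c : ℝ | 0 < c ∧ -(c • eE) ≤ y - x ∧ y - x ≤ c • eE}.Nonempty := huE (y - x)
  have hbdd : BddBelow {c : ℝ | 0 < c ∧ -(c • eE) ≤ y - x ∧ y - x ≤ c • eE} :=
    ⟨0, fun c hc => le_of_lt hc.1⟩
  obtain ⟨c, ⟨hc0, hc1, hc2⟩, hcδ⟩ := (csInf_lt_iff hbdd hne).mp hy
  -- so  -δ•eE ≤ y - x ≤ δ•eE  with δ = ε/(2M)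
  set δ : ℝ := ε / (2 * M) with hδdef
  have hcδ' : c ≤ δ := le_of_lt hcδ
  have hsc : c • eE ≤ δ • eE := smul_le_smul_of_nonneg_right hcδ' heE
  have h1 : y - x ≤ δ • eE := le_trans hc2 hsc
  have h2 : -(δ • eE) ≤ y - x := le_trans (neg_le_neg hsc) hc1
  -- apply T and weak additivity
  have hy1 : y ≤ x + δ • eE := by
    have := sub_le_iff_le_add.mp h1
    rwa [add_comm] at this
  have hy2 : x + (-δ) • eE ≤ y := by
    have hx : x ≤ y + δ • eE := neg_le_sub_iff_le_add.mp h2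
    rw [neg_smul, ← sub_eq_add_neg, sub_le_iff_le_add]
    exact hx
  have hT1 : T y ≤ T x + δ • T eE := by
    have := hmono hy1; rwa [hwa x δ] at this
  have hT2 : T x + (-δ) • T eE ≤ T y := by
    have := hmono hy2; rwa [hwa x (-δ)] at this
  have hδ0 : (0 : ℝ) < δ := by positivity
  -- bound T y - T x by (δ*M) • eF
  have hMe : δ • T eE ≤ (δ * M) • eF := by
    rw [mul_smul]; exact smul_le_smul_of_nonneg_left hTe (le_of_lt hδ0)
  have hB1 : T y - T x ≤ (δ * M) • eF := by
    have : T y - T x ≤ δ • T eE := by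
      have := sub_le_sub_right hT1 (T x); simpa using this
    exact le_trans this hMe
  have hB2 : -((δ * M) • eF) ≤ T y - T x := by
    have h : -(δ • T eE) ≤ T y - T x := by
      have := sub_le_sub_right hT2 (T x)
      rw [neg_smul] at this
      have h' : -(δ • T eE) ≤ T x + -(δ • T eE) - T x := by
        rw [add_sub_cancel_left]
      calc -(δ • T eE) ≤ T x + -(δ • T eE) - T x := h'
        _ ≤ T y - T x := this
    exact le_trans (neg_le_neg hMe) h
  -- conclude: ordNorm ≤ δ*M = ε/2 < ε
  have hmem : δ * M ∈ {c : ℝ | 0 < c ∧ -(c • eF) ≤ T y - T x ∧ T y - T x ≤ c • eF} :=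
    ⟨mul_pos hδ0 hM, hB2, hB1⟩
  have hle : ordNorm eF (T y - T x) ≤ δ * M :=
    csInf_le ⟨0, fun c hc => le_of_lt hc.1⟩ hmem
  have : δ * M = ε / 2 := by
    rw [hδdef]
    field_simp
  linarith
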